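/- Let Γ be a group, I finite, and ρ_i : Γ → G_i homomorphisms with kernels N_i, N'_i = ⋂_{j≠i} N_j. If the ρ_i are independent (the image of (ρ_i) : Γ → ∏ G_i equals ∏ ρ_i(Γ)), then Γ is generated by the subgroups N'_i together with ⋂_i N_i. -/

import Mathlib

private lemma list_prod_single {M : Type*} [Monoid M] {α : Type*} (f : α → M) (i : α) :
    ∀ l : List α, l.Nodup → i ∈ l → (∀ j, j ≠ i → f j = 1) → (l.map f).prod = f i := by
  intro l
  induction l with
  | nil => intro _ hi; simp at hi
  | cons a t ih =>
    intro hnd hi hf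
    rcases List.mem_cons.mp hi with rfl | hit
    · have ht : (t.map f).prod = 1 := by
        apply List.prod_eq_one
        intro y hy
        rcases List.mem_map.mp hy with ⟨j, hj, rfl⟩
        exact hf j (fun e => (List.nodup_cons.mp hnd).1 (e ▸ hj))
      simp [ht]
    · have ha : f a = 1 := hf a (fun e => (List.nodup_cons.mp hnd).1 (e ▸ hit))
      simp [ha, ih (List.nodup_cons.mp hnd).2 hit hf]

/-- If the `ρ_i` are independent (`I` finite), then `Γ` is generated by the
subgroups `N'_i = ⋂_{j ≠ i} ker ρ_j` together with `⋂ i, ker ρ_i`. -/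
theorem stmt_1 {Γ : Type*} [Group Γ] {I : Type*} [Finite I]
    {G : I → Type*} [∀ i, Group (G i)] (ρ : ∀ i, Γ →* G i)
    (h : ∀ γ : I → Γ, ∃ g : Γ, ∀ i, ρ i g = ρ i (γ i)) :
    (⨆ i : I, ⨅ (j : I) (_ : j ≠ i), (ρ j).ker) ⊔ (⨅ i : I, (ρ i).ker) = ⊤ := by
  classical
  cases nonempty_fintype I
  rw [eq_top_iff]
  intro g _
  choose x hx using fun i => h (fun j => if j = i then g else 1)
  set l : List I := Finset.univ.toList with hl
  set p : Γ := (l.map x).prod with hp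
  have hxj : ∀ i j, j ≠ i → ρ j (x i) = 1 := by
    intro i j hji
    rw [hx i j]
    simp [hji]
  have hpmem : p ∈ ⨆ i : I, ⨅ (j : I) (_ : j ≠ i), (ρ j).ker := by
    apply Subgroup.list_prod_mem
    intro y hy
    rcases List.mem_map.mp hy with ⟨i, _, rfl⟩
    refine Subgroup.mem_iSup_of_mem i ?_
    simp only [Subgroup.mem_iInf, MonoidHom.mem_ker]
    intro j hji
    exact hxj i j hji
  have hρp : ∀ i, ρ i p = ρ i g := by
    intro i
    rw [hp, map_list_prod, List.map_map]
    have := list_prod_single (fun j => ρ i (x j)) i l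
      (Finset.nodup_toList _) (by simp [hl]) (fun j hji => hxj j i hji.symm)
    exact this.trans (by simpa using hx i i)
  have hkermem : g * p⁻¹ ∈ ⨅ i : I, (ρ i).ker := by
    simp only [Subgroup.mem_iInf, MonoidHom.mem_ker]
    intro i
    rw [map_mul, map_inv, hρp i, mul_inv_cancel]
  have : g = (g * p⁻¹) * p := by group
  rw [this]
  exact Subgroup.mul_mem _ (Subgroup.mem_sup_right hkermem) (Subgroup.mem_sup_left hpmem)
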